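/- arXiv:2508.03233 — 2 statements merged into one kernel-verified Lean document; each statement's English description precedes it below -/
import Mathlib

section
/- The Frattini subgroup of U_{n+1}(ℤ/p^m) equals the kernel of the homomorphism φ_m : U_{n+1}(ℤ/p^m) → (𝔽_p)^n sending a matrix to its superdiagonal entries reduced modulo p; consequently, φ_m induces an isomorphism U_{n+1}(ℤ/p^m)/Frat(U_{n+1}(ℤ/p^m)) ≅ (𝔽_p)^n. -/
open Matrix
open scoped commutatorElement

set_option maxHeartbeats 1000000

/-- A matrix is upper-triangular unipotent. -/
def IsUU {R : Type*} [CommRing R] {N : ℕ} (M : Matrix (Fin N) (Fin N) R) : Prop :=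
  M.BlockTriangular id ∧ ∀ i, M i i = 1

theorem diag_mul_of_triangular {R : Type*} [CommRing R] {N : ℕ}
    {A B : Matrix (Fin N) (Fin N) R} (hA : A.BlockTriangular id)
    (hB : B.BlockTriangular id) (i : Fin N) :
    (A * B) i i = A i i * B i i := by
  rw [Matrix.mul_apply]
  refine Finset.sum_eq_single i (fun j _ hj => ?_) (fun h => absurd (Finset.mem_univ i) h)
  rcases lt_or_gt_of_ne hj with h | h
  · rw [hA h, zero_mul]
  · rw [hB h, mul_zero]

theorem IsUU.mul {R : Type*} [CommRing R] {N : ℕ} {A B : Matrix (Fin N) (Fin N) R}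
    (hA : IsUU A) (hB : IsUU B) : IsUU (A * B) :=
  ⟨hA.1.mul hB.1, fun i => by
    rw [diag_mul_of_triangular hA.1 hB.1, hA.2, hB.2, one_mul]⟩

theorem IsUU.one {R : Type*} [CommRing R] {N : ℕ} : IsUU (1 : Matrix (Fin N) (Fin N) R) :=
  ⟨Matrix.blockTriangular_one, fun i => Matrix.one_apply_eq i⟩

theorem IsUU.inv {R : Type*} [CommRing R] {N : ℕ} {A : (Matrix (Fin N) (Fin N) R)ˣ}
    (hA : IsUU (A : Matrix (Fin N) (Fin N) R)) :
    IsUU ((A⁻¹ : (Matrix (Fin N) (Fin N) R)ˣ) : Matrix (Fin N) (Fin N) R) := by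
  letI := A.invertible
  have hinv : ((A⁻¹ : (Matrix (Fin N) (Fin N) R)ˣ) : Matrix (Fin N) (Fin N) R)
      = (A : Matrix (Fin N) (Fin N) R)⁻¹ := Matrix.coe_units_inv A
  have t : ((A : Matrix (Fin N) (Fin N) R)⁻¹).BlockTriangular id :=
    Matrix.blockTriangular_inv_of_blockTriangular hA.1
  refine ⟨hinv ▸ t, fun i => ?_⟩
  have h1 : ((A : Matrix (Fin N) (Fin N) R) *
      ((A⁻¹ : (Matrix (Fin N) (Fin N) R)ˣ) : Matrix (Fin N) (Fin N) R)) i i = 1 := by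
    rw [← Units.val_mul, mul_inv_cancel]
    exact Matrix.one_apply_eq i
  rw [diag_mul_of_triangular hA.1 (hinv ▸ t) i, hA.2, one_mul] at h1
  exact h1

/-- The group of upper-triangular unipotent `N × N` matrices over `R`,
as a subgroup of the units of the matrix ring. -/
def UT (R : Type*) [CommRing R] (N : ℕ) : Subgroup (Matrix (Fin N) (Fin N) R)ˣ where
  carrier := {u | IsUU (u : Matrix (Fin N) (Fin N) R)}
  one_mem' := IsUU.one
  mul_mem' := fun {a b} ha hb => by
    show IsUU ((a * b : (Matrix (Fin N) (Fin N) R)ˣ) : Matrix (Fin N) (Fin N) R)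
    rw [Units.val_mul]; exact ha.mul hb
  inv_mem' := fun {a} ha => ha.inv

/-- The `(i,j)` entry of an element of `UT R N`. -/
def UTentry {R : Type*} [CommRing R] {N : ℕ} (u : UT R N) (i j : Fin N) : R :=
  ((u : (Matrix (Fin N) (Fin N) R)ˣ) : Matrix (Fin N) (Fin N) R) i j

section Aux

open Subgroup

variable {R : Type*} [CommRing R] {N : ℕ}

theorem UT_isUU (u : UT R N) : IsUU ((u : (Matrix (Fin N) (Fin N) R)ˣ) : Matrix (Fin N) (Fin N) R) :=
  u.2

theorem UT_val_mul (u v : UT R N) :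
    (((u * v : UT R N) : (Matrix (Fin N) (Fin N) R)ˣ) : Matrix (Fin N) (Fin N) R)
      = ((u : (Matrix (Fin N) (Fin N) R)ˣ) : Matrix (Fin N) (Fin N) R)
        * ((v : (Matrix (Fin N) (Fin N) R)ˣ) : Matrix (Fin N) (Fin N) R) := rfl

theorem UTentry_mul (u v : UT R N) (a b : Fin N) :
    UTentry (u * v) a b = ∑ k, UTentry u a k * UTentry v k b := by
  show ((((u * v : UT R N) : (Matrix (Fin N) (Fin N) R)ˣ) : Matrix (Fin N) (Fin N) R)) a b = _
  rw [UT_val_mul, Matrix.mul_apply]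
  rfl

theorem UTentry_lower (u : UT R N) {a b : Fin N} (h : b < a) : UTentry u a b = 0 :=
  (UT_isUU u).1 h

theorem UTentry_diag (u : UT R N) (a : Fin N) : UTentry u a a = 1 := (UT_isUU u).2 a

theorem UT_eq_one (u : UT R N) (h : ∀ a b : Fin N, a < b → UTentry u a b = 0) : u = 1 := by
  have hM : ((u : (Matrix (Fin N) (Fin N) R)ˣ) : Matrix (Fin N) (Fin N) R) = 1 := by
    ext a b
    rcases lt_trichotomy a b with hab | rfl | hab
    · rw [Matrix.one_apply_ne (ne_of_lt hab)]; exact h a b hab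
    · rw [Matrix.one_apply_eq]; exact UTentry_diag u a
    · rw [Matrix.one_apply_ne (ne_of_gt hab)]; exact UTentry_lower u hab
  exact Subtype.ext (Units.ext hM)

theorem UTentry_mul_adj (u v : UT R N) {a b : Fin N} (hab : (b : ℕ) = (a : ℕ) + 1) :
    UTentry (u * v) a b = UTentry u a b + UTentry v a b := by
  have hne : a ≠ b := by intro h; rw [h] at hab; omega
  rw [UTentry_mul]
  rw [← Finset.sum_subset (Finset.subset_univ ({a, b} : Finset (Fin N)))]
  · rw [Finset.sum_pair hne, UTentry_diag, UTentry_diag, one_mul, mul_one, add_comm]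
  · intro k _ hk
    simp only [Finset.mem_insert, Finset.mem_singleton, not_or] at hk
    have h1 : (k : ℕ) ≠ (a : ℕ) := fun h => hk.1 (Fin.ext h)
    have h2 : (k : ℕ) ≠ (b : ℕ) := fun h => hk.2 (Fin.ext h)
    rcases lt_or_ge (k : ℕ) (a : ℕ) with h | h
    · rw [UTentry_lower u (show k < a from h), zero_mul]
    · rw [UTentry_lower v (show b < k by rw [Fin.lt_def]; omega), mul_zero]

/-- The elementary unipotent matrix `1 + c E_{ij}`. -/
def elemMat (i j : Fin N) (c : R) : Matrix (Fin N) (Fin N) R :=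
  1 + Matrix.single i j c

theorem elemMat_apply (i j a b : Fin N) (c : R) :
    elemMat i j c a b = (1 : Matrix (Fin N) (Fin N) R) a b + if i = a ∧ j = b then c else 0 :=
  rfl

theorem elemMat_mul (i j : Fin N) (hij : i ≠ j) (c d : R) :
    elemMat i j c * elemMat i j d = elemMat i j (c + d) := by
  have h0 : Matrix.single i j c * Matrix.single i j d = 0 :=
    Matrix.single_mul_single_of_ne c i j _ hij.symm d
  simp only [elemMat, add_mul, mul_add, one_mul, mul_one, h0, add_zero,
    Matrix.single_add]
  abel

theorem elemMat_zero (i j : Fin N) : elemMat i j (0 : R) = 1 := by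
  simp [elemMat]

theorem elemMat_isUU (i j : Fin N) (hij : i < j) (c : R) : IsUU (elemMat i j c) := by
  constructor
  · intro a b hba
    rw [elemMat_apply, Matrix.one_apply_ne (show a ≠ b from ne_of_gt hba), if_neg, add_zero]
    rintro ⟨rfl, rfl⟩
    exact absurd hij (not_lt.mpr (le_of_lt hba))
  · intro a
    rw [elemMat_apply, Matrix.one_apply_eq, if_neg, add_zero]
    rintro ⟨rfl, rfl⟩
    exact absurd rfl (ne_of_lt hij)

/-- The elementary unipotent matrix as an element of `UT R N`. -/
def elemU (i j : Fin N) (hij : i < j) (c : R) : UT R N :=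
  ⟨⟨elemMat i j c, elemMat i j (-c),
    by rw [elemMat_mul i j (ne_of_lt hij), add_neg_cancel, elemMat_zero],
    by rw [elemMat_mul i j (ne_of_lt hij), neg_add_cancel, elemMat_zero]⟩,
    elemMat_isUU i j hij c⟩

theorem UTentry_elemU (i j : Fin N) (hij : i < j) (c : R) (a b : Fin N) :
    UTentry (elemU i j hij c) a b
      = (1 : Matrix (Fin N) (Fin N) R) a b + if i = a ∧ j = b then c else 0 := rfl

theorem elemU_mul (i j : Fin N) (hij : i < j) (c d : R) :
    elemU i j hij c * elemU i j hij d = elemU i j hij (c + d) :=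
  Subtype.ext (Units.ext (elemMat_mul i j (ne_of_lt hij) c d))

theorem elemU_zero (i j : Fin N) (hij : i < j) : elemU i j hij (0 : R) = 1 :=
  Subtype.ext (Units.ext (elemMat_zero i j))

theorem elemU_inv (i j : Fin N) (hij : i < j) (c : R) :
    (elemU i j hij c)⁻¹ = elemU i j hij (-c) :=
  inv_eq_of_mul_eq_one_right (by rw [elemU_mul, add_neg_cancel, elemU_zero])

theorem elemU_pow (i j : Fin N) (hij : i < j) (c : R) (t : ℕ) :
    elemU i j hij c ^ t = elemU i j hij (t • c) := by
  induction t with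
  | zero => rw [pow_zero, zero_smul, elemU_zero]
  | succ k ih => rw [pow_succ, ih, elemU_mul, succ_nsmul]

theorem stdBasisMatrix_neg (a b : Fin N) (x : R) :
    Matrix.single a b (-x) = -Matrix.single a b x := by
  ext u v
  simp only [Matrix.single, Matrix.of_apply, Matrix.neg_apply]
  split_ifs <;> simp

theorem elemMat_comm (i j k : Fin N) (hij : i ≠ j) (hjk : j ≠ k) (hik : i ≠ k) (c d : R) :
    elemMat i j c * elemMat j k d * elemMat i j (-c) * elemMat j k (-d)
      = elemMat i k (c * d) := by
  have hAA : ∀ x y : R, Matrix.single i j x * Matrix.single i j y = 0 :=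
    fun x y => Matrix.single_mul_single_of_ne x i j _ hij.symm y
  have hBB : ∀ x y : R, Matrix.single j k x * Matrix.single j k y = 0 :=
    fun x y => Matrix.single_mul_single_of_ne x j k _ hjk.symm y
  have hBA : ∀ x y : R, Matrix.single j k x * Matrix.single i j y = 0 :=
    fun x y => Matrix.single_mul_single_of_ne x j k _ hik.symm y
  have hAB : ∀ x y : R,
      Matrix.single i j x * Matrix.single j k y
        = Matrix.single i k (x * y) :=
    fun x y => Matrix.single_mul_single_same x i j k y
  have hCA : ∀ x y : R, Matrix.single i k x * Matrix.single i j y = 0 :=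
    fun x y => Matrix.single_mul_single_of_ne x i k _ hik.symm y
  have hCB : ∀ x y : R, Matrix.single i k x * Matrix.single j k y = 0 :=
    fun x y => Matrix.single_mul_single_of_ne x i k _ hjk.symm y
  simp only [elemMat, stdBasisMatrix_neg, add_mul, mul_add, one_mul, mul_one,
    mul_neg, neg_mul, neg_neg, hAA, hBB, hBA, hAB, hCA, hCB, neg_zero, add_zero, zero_add]
  abel

theorem elemU_comm (i j k : Fin N) (hij : i < j) (hjk : j < k) (c d : R) :
    ⁅elemU i j hij c, elemU j k hjk d⁆ = elemU i k (hij.trans hjk) (c * d) := by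
  rw [commutatorElement_def, elemU_inv, elemU_inv]
  exact Subtype.ext (Units.ext
    (elemMat_comm i j k (ne_of_lt hij) (ne_of_lt hjk) (ne_of_lt (hij.trans hjk)) c d))

/-- The set of elementary unipotent matrices. -/
def elemSet (R : Type*) [CommRing R] (N : ℕ) : Set (UT R N) :=
  {x | ∃ (i : Fin N) (j : Fin N) (hij : i < j) (c : R), x = elemU i j hij c}

theorem rank_decomp {a b : Fin N} {q r kk : ℕ} (hab : a < b) (hN : 0 < N) (hrN : r < N)
    (hkq : kk = N * q + r) (h : ((b : ℕ) - a - 1) * N + a = kk) :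
    (a : ℕ) = r ∧ (b : ℕ) = r + q + 1 := by
  have ha := a.isLt
  have hab' : (a : ℕ) < b := hab
  have har : (a : ℕ) = r := by
    have h1 : (((b : ℕ) - a - 1) * N + a) % N = (a : ℕ) := by
      rw [add_comm, Nat.add_mul_mod_self_right, Nat.mod_eq_of_lt ha]
    have h2 : (N * q + r) % N = r := by
      rw [add_comm, Nat.add_mul_mod_self_left, Nat.mod_eq_of_lt hrN]
    rw [h, hkq, h2] at h1
    exact h1.symm
  have hmul : N * ((b : ℕ) - a - 1) = N * q := by
    have h1 : ((b : ℕ) - a - 1) * N = N * q := by omega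
    rw [← h1, Nat.mul_comm]
  have hq : (b : ℕ) - a - 1 = q := Nat.eq_of_mul_eq_mul_left hN hmul
  exact ⟨har, by omega⟩

theorem UT_mem_closure_elemSet (u : UT R N) : u ∈ Subgroup.closure (elemSet R N) := by
  suffices H : ∀ t, ∀ u : UT R N,
      (∀ a b : Fin N, a < b → ((b : ℕ) - a - 1) * N + a < N * N - t → UTentry u a b = 0) →
      u ∈ Subgroup.closure (elemSet R N) by
    refine H (N * N) u fun a b _ hr => absurd hr (by omega)
  intro t
  induction t with
  | zero =>
    intro u hu
    have : u = 1 := by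
      refine UT_eq_one u fun a b hab => hu a b hab ?_
      have ha := a.isLt
      have hb := b.isLt
      have hab' : (a : ℕ) < b := hab
      have hd : ((b : ℕ) - a - 1) ≤ N - 2 := by omega
      have h1 : ((b : ℕ) - a - 1) * N ≤ (N - 2) * N := Nat.mul_le_mul_right N hd
      have h2 : (N - 2) * N + N ≤ N * N := by
        have e : (N - 2) * N + N = ((N - 2) + 1) * N := (Nat.succ_mul _ _).symm
        rw [e]
        exact Nat.mul_le_mul_right N (by omega)
      omega
    rw [this]; exact one_mem _
  | succ t ih =>
    intro u hu
    rcases Nat.lt_or_ge t (N * N) with hcase | hcase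
    · -- N * N - t = (N * N - (t+1)) + 1
      set kk := N * N - (t + 1) with hkk
      have hsucc : N * N - t = kk + 1 := by omega
      have hN : 0 < N := by
        rcases Nat.eq_zero_or_pos N with h0 | h0
        · rw [h0] at hcase; omega
        · exact h0
      obtain ⟨qq, rr, hrN, hkq⟩ : ∃ q r, r < N ∧ kk = N * q + r :=
        ⟨kk / N, kk % N, Nat.mod_lt _ hN, (Nat.div_add_mod kk N).symm⟩
      by_cases hpos : rr + qq + 1 < N
      · set i : Fin N := ⟨rr, hrN⟩ with hi
        set j : Fin N := ⟨rr + qq + 1, hpos⟩ with hj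
        have hij : i < j := by
          rw [Fin.lt_def]
          show rr < rr + qq + 1
          omega
        set c := UTentry u i j with hc
        set v := elemU i j hij (-c) * u with hv
        have hventry : ∀ a b : Fin N,
            UTentry v a b = UTentry u a b + (if a = i then (-c) * UTentry u j b else 0) := by
          intro a b
          have hrfl : UTentry v a b = (elemMat i j (-c) *
              ((u : (Matrix (Fin N) (Fin N) R)ˣ) : Matrix (Fin N) (Fin N) R)) a b := rfl
          rw [hrfl, elemMat, add_mul, one_mul, Matrix.add_apply,
            show ((u : (Matrix (Fin N) (Fin N) R)ˣ) : Matrix (Fin N) (Fin N) R) a b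
              = UTentry u a b from rfl]
          congr 1
          by_cases hai : a = i
          · rw [if_pos hai, hai]
            exact Matrix.single_mul_apply_same (-c) i j b _
          · rw [if_neg hai]
            exact Matrix.single_mul_apply_of_ne (-c) i j a b hai _
        have hvz : ∀ a b : Fin N, a < b →
            ((b : ℕ) - a - 1) * N + a < N * N - t → UTentry v a b = 0 := by
          intro a b hab hr
          have hr' : ((b : ℕ) - a - 1) * N + a ≤ kk := by omega
          rw [hventry]
          by_cases hai : a = i
          · subst hai
            rw [if_pos rfl]
            have hadiv : (i : ℕ) = rr := rfl
            have hjval : (j : ℕ) = rr + qq + 1 := rfl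
            have hab' : (i : ℕ) < b := hab
            have hbj : (b : ℕ) ≤ (j : ℕ) := by
              have h3 : ((b : ℕ) - i - 1) * N + (i : ℕ) ≤ N * qq + rr := by
                rw [← hkq]; exact hr'
              have h4 : ((b : ℕ) - i - 1) * N ≤ N * qq := by omega
              have hx : N * ((b : ℕ) - i - 1) ≤ N * qq := by
                rw [Nat.mul_comm]; exact h4
              have hy : ((b : ℕ) - i - 1) ≤ qq := Nat.le_of_mul_le_mul_left hx hN
              rw [hjval]; omega
            rcases eq_or_lt_of_le hbj with hbe | hbl
            · have hbj2 : b = j := Fin.ext hbe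
              subst hbj2
              rw [UTentry_diag, mul_one, ← hc, add_neg_cancel]
            · have hblt : b < j := hbl
              rw [UTentry_lower u hblt, mul_zero, add_zero]
              apply hu i b hab
              have hbj' : (b : ℕ) < (j : ℕ) := hbl
              rw [hjval] at hbj'
              have hd : ((b : ℕ) - i - 1) + 1 ≤ qq := by omega
              have hz : (((b : ℕ) - i - 1) + 1) * N ≤ qq * N := Nat.mul_le_mul_right N hd
              have hz2 : ((b : ℕ) - i - 1) * N + N ≤ qq * N := by
                rw [← Nat.succ_mul]; exact hz
              have hcm : qq * N = N * qq := Nat.mul_comm _ _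
              have hrN' : (i : ℕ) < N := i.isLt
              omega
          · rw [if_neg hai, add_zero]
            apply hu a b hab
            rcases Nat.lt_or_ge (((b : ℕ) - a - 1) * N + a) kk with h | h
            · omega
            · exfalso
              have heq : ((b : ℕ) - a - 1) * N + a = kk := by omega
              have hdc := (rank_decomp hab hN hrN hkq heq).1
              exact hai (Fin.ext hdc)
        have hvcl := ih v hvz
        have he : elemU i j hij (-c) ∈ Subgroup.closure (elemSet R N) :=
          Subgroup.subset_closure ⟨i, j, hij, -c, rfl⟩
        have hu' : u = (elemU i j hij (-c))⁻¹ * v := by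
          rw [hv, ← mul_assoc, inv_mul_cancel, one_mul]
        rw [hu']
        exact mul_mem (inv_mem he) hvcl
      · -- no position of rank kk exists
        apply ih u
        intro a b hab hr
        apply hu a b hab
        rcases Nat.lt_or_ge (((b : ℕ) - a - 1) * N + a) kk with h | h
        · omega
        · exfalso
          have heq : ((b : ℕ) - a - 1) * N + a = kk := by omega
          have hdec := rank_decomp hab hN hrN hkq heq
          exact hpos (hdec.2 ▸ b.isLt)
    · apply ih u
      intro a b hab hr
      exact hu a b hab (by omega)

theorem UT_val_pow (u : UT R N) (t : ℕ) :
    (((u ^ t : UT R N) : (Matrix (Fin N) (Fin N) R)ˣ) : Matrix (Fin N) (Fin N) R)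
      = (((u : (Matrix (Fin N) (Fin N) R)ˣ) : Matrix (Fin N) (Fin N) R)) ^ t := by
  rw [SubmonoidClass.coe_pow, Units.val_pow_eq_pow_val]

theorem UT_pow_eq_one (u : UT R N) (M : ℕ)
    (hc : ∀ jj : ℕ, jj ≠ 0 → jj < N → ((M.choose jj : ℕ) : R) = 0) : u ^ M = 1 := by
  set A := (((u : (Matrix (Fin N) (Fin N) R)ˣ) : Matrix (Fin N) (Fin N) R)) with hA
  set B := A - 1 with hB
  have hBstrict : ∀ a b : Fin N, ¬ a < b → B a b = 0 := by
    intro a b h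
    rcases eq_or_lt_of_le (not_lt.mp h) with hba | hba
    · cases hba
      show A a a - (1 : Matrix (Fin N) (Fin N) R) a a = 0
      rw [show A a a = UTentry u a a from rfl, UTentry_diag, Matrix.one_apply_eq, sub_self]
    · show A a b - (1 : Matrix (Fin N) (Fin N) R) a b = 0
      rw [show A a b = UTentry u a b from rfl, UTentry_lower u hba,
        Matrix.one_apply_ne (ne_of_gt hba), sub_zero]
  have hpow : ∀ (t : ℕ) (a b : Fin N), (B ^ t) a b ≠ 0 → (a : ℕ) + t ≤ (b : ℕ) := by
    intro t
    induction t with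
    | zero =>
      intro a b h
      rw [pow_zero] at h
      by_cases hab : a = b
      · subst hab; omega
      · exact absurd (Matrix.one_apply_ne hab) h
    | succ s ihs =>
      intro a b h
      by_contra hcon
      apply h
      rw [pow_succ', Matrix.mul_apply]
      apply Finset.sum_eq_zero
      intro l _
      by_cases hl : a < l
      · have h2 : (B ^ s) l b = 0 := by
          by_contra h2
          have := ihs l b h2
          have hal : (a : ℕ) < (l : ℕ) := hl
          omega
        rw [h2, mul_zero]
      · rw [hBstrict a l hl, zero_mul]
  have hBN : B ^ N = 0 := by
    ext a b
    rw [Matrix.zero_apply]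
    by_contra h
    have := hpow N a b h
    have := b.isLt
    omega
  have hAM : A ^ M = 1 := by
    have h1 : A = B + 1 := by rw [hB, sub_add_cancel]
    rw [h1, Commute.add_pow (Commute.one_right B) M]
    rw [Finset.sum_eq_single_of_mem 0 (Finset.mem_range.mpr (by omega))]
    · simp
    · intro t _ ht0
      rcases Nat.lt_or_ge t N with h | h
      · have hz : ((M.choose t : ℕ) : Matrix (Fin N) (Fin N) R) = 0 := by
          have h2 : ((M.choose t : ℕ) : Matrix (Fin N) (Fin N) R)
              = ((M.choose t : ℕ) : R) • (1 : Matrix (Fin N) (Fin N) R) := by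
            rw [Nat.cast_smul_eq_nsmul, nsmul_eq_mul, mul_one]
          rw [h2, hc t ht0 h, zero_smul]
        rw [hz, mul_zero]
      · have hz : B ^ t = 0 := by
          rw [← Nat.sub_add_cancel h, pow_add, hBN, mul_zero]
        rw [hz, zero_mul, zero_mul]
  have : (((u ^ M : UT R N) : (Matrix (Fin N) (Fin N) R)ˣ) : Matrix (Fin N) (Fin N) R) = 1 := by
    rw [UT_val_pow, ← hA, hAM]
  exact Subtype.ext (Units.ext this)

end Aux

section GroupAux

open Subgroup

variable {H : Type*} [Group H]

theorem quot_dichotomy (M : Subgroup H) [M.Normal] (hM : IsCoatom M)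
    (K : Subgroup (H ⧸ M)) : K = ⊥ ∨ K = ⊤ := by
  by_cases hK : K.comap (QuotientGroup.mk' M) = M
  · left
    have h1 := congrArg (Subgroup.map (QuotientGroup.mk' M)) hK
    rw [Subgroup.map_comap_eq_self_of_surjective (QuotientGroup.mk'_surjective M)] at h1
    rw [h1]
    rw [Subgroup.map_eq_bot_iff, QuotientGroup.ker_mk']
  · right
    have hle : M ≤ K.comap (QuotientGroup.mk' M) := by
      intro x hx
      rw [Subgroup.mem_comap, show (QuotientGroup.mk' M) x = 1 from
        (QuotientGroup.eq_one_iff x).mpr hx]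
      exact K.one_mem
    have htop : K.comap (QuotientGroup.mk' M) = ⊤ := hM.2 _ (lt_of_le_of_ne hle (Ne.symm hK))
    have h1 := congrArg (Subgroup.map (QuotientGroup.mk' M)) htop
    rw [Subgroup.map_comap_eq_self_of_surjective (QuotientGroup.mk'_surjective M)] at h1
    rw [h1, Subgroup.map_top_of_surjective _ (QuotientGroup.mk'_surjective M)]

theorem key_pow_comm {p : ℕ} [Fact p.Prime] [Finite H] (hp : IsPGroup p H)
    {M : Subgroup H} [M.Normal] (hM : IsCoatom M) :
    (∀ a b : H, ⁅a, b⁆ ∈ M) ∧ ∀ g : H, g ^ p ∈ M := by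
  have hQp : IsPGroup p (H ⧸ M) := hp.to_quotient M
  have dich := quot_dichotomy M hM
  have hx : ∀ x : H ⧸ M, x ^ p = 1 := by
    intro x
    rcases dich (Subgroup.zpowers (x ^ p)) with hb | ht
    · exact Subgroup.zpowers_eq_bot.mp hb
    · by_cases hx1 : x = 1
      · rw [hx1, one_pow]
      · exfalso
        have hxm : x ∈ Subgroup.zpowers (x ^ p) := ht ▸ Subgroup.mem_top x
        obtain ⟨z, hz⟩ := hxm
        have hzz : ((x ^ p : H ⧸ M)) ^ z = x := hz
        have hz' : x ^ ((p : ℤ) * z - 1) = 1 := by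
          rw [_root_.zpow_sub, _root_.zpow_mul, zpow_natCast, hzz, zpow_one, mul_inv_cancel]
        obtain ⟨k, hk⟩ := hQp x
        obtain ⟨a, ha, hord⟩ := (Nat.dvd_prime_pow Fact.out).mp (orderOf_dvd_of_pow_eq_one hk)
        have hdvd : ((orderOf x : ℤ)) ∣ ((p : ℤ) * z - 1) :=
          orderOf_dvd_iff_zpow_eq_one.mpr hz'
        have ha1 : 1 ≤ a := by
          by_contra h
          have : a = 0 := by omega
          rw [this, pow_zero] at hord
          exact hx1 (orderOf_eq_one_iff.mp hord)
        have hpord : (p : ℤ) ∣ (orderOf x : ℤ) := by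
          rw [hord]
          exact_mod_cast dvd_pow_self p (by omega : a ≠ 0)
        have : (p : ℤ) ∣ 1 := by
          have h1 : (p : ℤ) ∣ (p : ℤ) * z - 1 := hpord.trans hdvd
          have h2 : (p : ℤ) ∣ (p : ℤ) * z := Dvd.intro z rfl
          have h3 := dvd_sub h2 h1
          simpa using h3
        have := Int.le_of_dvd one_pos this
        have := (Fact.out : p.Prime).two_le
        omega
  have hcomm : ∀ x y : H ⧸ M, Commute x y := by
    intro x y
    rcases dich (Subgroup.zpowers x) with hb | ht
    · rw [Subgroup.zpowers_eq_bot.mp hb]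
      exact Commute.one_left y
    · have : y ∈ Subgroup.zpowers x := ht ▸ Subgroup.mem_top y
      obtain ⟨z, hz⟩ := this
      rw [← hz]
      exact (Commute.refl x).zpow_right z
  constructor
  · intro a b
    rw [← QuotientGroup.eq_one_iff]
    have : (QuotientGroup.mk' M) ⁅a, b⁆ = ⁅(QuotientGroup.mk' M) a, (QuotientGroup.mk' M) b⁆ :=
      map_commutatorElement _ a b
    rw [show ((⁅a, b⁆ : H) : H ⧸ M) = (QuotientGroup.mk' M) ⁅a, b⁆ from rfl, this]
    exact commutatorElement_eq_one_iff_commute.mpr (hcomm _ _)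
  · intro g
    rw [← QuotientGroup.eq_one_iff]
    rw [show ((g ^ p : H) : H ⧸ M) = ((g : H ⧸ M)) ^ p from rfl]
    exact hx _

theorem ker_coatom {p : ℕ} [Fact p.Prime] (ψ : H →* Multiplicative (ZMod p))
    (hs : Function.Surjective ψ) : IsCoatom ψ.ker := by
  haveI : NeZero p := ⟨(Fact.out : p.Prime).ne_zero⟩
  haveI : Fact (1 < p) := ⟨(Fact.out : p.Prime).one_lt⟩
  haveI hcard : Fact (Nat.card (Multiplicative (ZMod p))).Prime := by
    constructor
    have : Nat.card (Multiplicative (ZMod p)) = p := by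
      rw [Nat.card_congr (show Multiplicative (ZMod p) ≃ ZMod p from Multiplicative.toAdd),
        Nat.card_zmod]
    rw [this]
    exact Fact.out
  constructor
  · intro htop
    obtain ⟨y, hy⟩ := exists_ne (1 : Multiplicative (ZMod p))
    obtain ⟨x, rfl⟩ := hs y
    exact hy (MonoidHom.mem_ker.mp (htop ▸ Subgroup.mem_top x))
  · intro K hK
    obtain ⟨x, hxK, hxk⟩ := SetLike.exists_of_lt hK
    have hmap : Subgroup.map ψ K = ⊤ := by
      rcases (Subgroup.map ψ K).eq_bot_or_eq_top_of_prime_card with hb | ht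
      · exfalso
        have hmem : ψ x ∈ Subgroup.map ψ K := ⟨x, hxK, rfl⟩
        rw [hb, Subgroup.mem_bot] at hmem
        exact hxk (MonoidHom.mem_ker.mpr hmem)
      · exact ht
    rw [eq_top_iff']
    intro g
    have : ψ g ∈ Subgroup.map ψ K := hmap ▸ Subgroup.mem_top _
    obtain ⟨w, hwK, hwe⟩ := this
    have hker : g * w⁻¹ ∈ ψ.ker := by
      rw [MonoidHom.mem_ker, _root_.map_mul, _root_.map_inv, hwe, mul_inv_cancel]
    have hgw : g = (g * w⁻¹) * w := by group
    rw [hgw]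
    exact mul_mem (hK.le hker) hwK

end GroupAux

theorem pm_dvd_choose {p : ℕ} (hp : p.Prime) (mm nn jj : ℕ) (hj0 : jj ≠ 0) (hjn : jj ≤ nn) :
    p ^ mm ∣ (p ^ (mm + nn)).choose jj := by
  have hjle : jj ≤ p ^ (mm + nn) := by
    have h1 : nn < p ^ nn := Nat.lt_pow_self hp.one_lt
    have h2 : p ^ nn ≤ p ^ (mm + nn) := Nat.pow_le_pow_right hp.pos (by omega)
    omega
  apply pow_dvd_of_le_emultiplicity
  rw [hp.emultiplicity_choose_prime_pow hjle hj0]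
  have ht : multiplicity p jj ≤ nn := by
    have hd : p ^ multiplicity p jj ∣ jj := pow_multiplicity_dvd p jj
    have h1 := Nat.le_of_dvd (Nat.pos_of_ne_zero hj0) hd
    have h2 : multiplicity p jj < p ^ multiplicity p jj :=
      Nat.lt_pow_self hp.one_lt
    omega
  exact_mod_cast (by omega : mm ≤ (mm + nn) - multiplicity p jj)

/-- The homomorphism `φ_m` sending a unipotent matrix to its superdiagonal mod `p`. -/
def phiUT (p m n : ℕ) [Fact p.Prime] (hd : p ∣ p ^ m) :
    UT (ZMod (p ^ m)) (n + 1) →* Multiplicative (Fin n → ZMod p) where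
  toFun u := Multiplicative.ofAdd fun i =>
    ZMod.castHom hd (ZMod p) (UTentry u i.castSucc i.succ)
  map_one' := by
    show Multiplicative.ofAdd (fun i : Fin n =>
      ZMod.castHom hd (ZMod p) (UTentry (1 : UT (ZMod (p ^ m)) (n + 1)) i.castSucc i.succ)) = 1
    have h0 : (fun i : Fin n =>
        ZMod.castHom hd (ZMod p) (UTentry (1 : UT (ZMod (p ^ m)) (n + 1)) i.castSucc i.succ))
        = (0 : Fin n → ZMod p) := by
      funext i
      rw [show UTentry (1 : UT (ZMod (p ^ m)) (n + 1)) i.castSucc i.succ = 0 from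
        Matrix.one_apply_ne (Fin.castSucc_lt_succ (i := i)).ne, map_zero]
      rfl
    rw [h0]
    exact ofAdd_zero
  map_mul' u v := by
    show Multiplicative.ofAdd _
      = Multiplicative.ofAdd (fun i : Fin n =>
          ZMod.castHom hd (ZMod p) (UTentry u i.castSucc i.succ))
        * Multiplicative.ofAdd (fun i : Fin n =>
          ZMod.castHom hd (ZMod p) (UTentry v i.castSucc i.succ))
    rw [← ofAdd_add]
    refine congrArg Multiplicative.ofAdd (funext fun i => ?_)
    have hadj : ((i.succ : Fin (n + 1)) : ℕ) = ((i.castSucc : Fin (n + 1)) : ℕ) + 1 := by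
      simp
    show ZMod.castHom hd (ZMod p) (UTentry (u * v) i.castSucc i.succ) = _
    rw [UTentry_mul_adj u v hadj, map_add]
    rfl

/-- the Frattini subgroup of `U_{n+1}(ℤ/p^m)` is the kernel of `φ_m`
(superdiagonal entries mod `p`), and `φ_m` induces an isomorphism
`U_{n+1}(ℤ/p^m)/Frat ≅ (𝔽_p)^n`. -/
theorem frattini_unipotent_eq_ker (p m n : ℕ) [Fact p.Prime] (hm : 1 ≤ m) (hn : 1 ≤ n) :
    (∀ u : UT (ZMod (p ^ m)) (n + 1),
      u ∈ frattini (UT (ZMod (p ^ m)) (n + 1)) ↔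
      ∀ i : Fin n, ZMod.castHom (dvd_pow_self p (Nat.one_le_iff_ne_zero.mp hm)) (ZMod p)
        (UTentry u i.castSucc i.succ) = 0) ∧
    ∃ e : (UT (ZMod (p ^ m)) (n + 1) ⧸ frattini (UT (ZMod (p ^ m)) (n + 1))) ≃*
        Multiplicative (Fin n → ZMod p),
      ∀ u : UT (ZMod (p ^ m)) (n + 1),
        e (QuotientGroup.mk u) = Multiplicative.ofAdd (fun i =>
          ZMod.castHom (dvd_pow_self p (Nat.one_le_iff_ne_zero.mp hm)) (ZMod p)
            (UTentry u i.castSucc i.succ)) := by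
  classical
  have hp : p.Prime := Fact.out
  haveI : NeZero p := ⟨hp.ne_zero⟩
  haveI : NeZero (p ^ m) := ⟨pow_ne_zero m hp.ne_zero⟩
  haveI : Fact (1 < p) := ⟨hp.one_lt⟩
  set hd : p ∣ p ^ m := dvd_pow_self p (Nat.one_le_iff_ne_zero.mp hm) with hhd
  set G := UT (ZMod (p ^ m)) (n + 1) with hG
  set φ := phiUT p m n hd with hφ
  -- `G` is a finite `p`-group
  have hPG : IsPGroup p G := by
    intro u
    refine ⟨m + (n + 1), UT_pow_eq_one u (p ^ (m + (n + 1))) ?_⟩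
    intro jj hj0 hjN
    rw [ZMod.natCast_eq_zero_iff]
    exact pm_dvd_choose hp m (n + 1) jj hj0 (by omega)
  -- the verbal subgroup
  set V : Subgroup G := commutator G ⊔ Subgroup.normalClosure {x : G | ∃ g : G, g ^ p = x}
    with hV
  haveI hVnormal : V.Normal := Subgroup.sup_normal _ _
  have hVker : V ≤ φ.ker := by
    apply sup_le
    · exact Abelianization.commutator_subset_ker φ
    · apply Subgroup.normalClosure_le_normal
      rintro x ⟨g, rfl⟩
      show g ^ p ∈ φ.ker
      rw [MonoidHom.mem_ker, map_pow]
      rw [show φ g = Multiplicative.ofAdd (Multiplicative.toAdd (φ g)) from rfl, ← ofAdd_nsmul]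
      have h0 : p • Multiplicative.toAdd (φ g) = (0 : Fin n → ZMod p) := by
        funext i
        rw [Pi.smul_apply, nsmul_eq_mul, ZMod.natCast_self, zero_mul]
        rfl
      rw [h0]
      exact ofAdd_zero
  -- the quotient by `V` is commutative
  have hcommQ : ∀ x y : G ⧸ V, x * y = y * x := by
    intro x y
    induction x using QuotientGroup.induction_on with | H a =>
    induction y using QuotientGroup.induction_on with | H b =>
    show ((a * b : G) : G ⧸ V) = ((b * a : G) : G ⧸ V)
    rw [QuotientGroup.eq]
    have h1 : (a * b)⁻¹ * (b * a) = ⁅b⁻¹, a⁻¹⁆ := by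
      rw [commutatorElement_def]
      group
    rw [h1]
    exact le_sup_left (α := Subgroup G)
      (Subgroup.commutator_mem_commutator (Subgroup.mem_top _) (Subgroup.mem_top _))
  letI : CommGroup (G ⧸ V) := { (inferInstance : Group (G ⧸ V)) with mul_comm := hcommQ }
  -- generators of the quotient
  set gQ : Fin n → G ⧸ V :=
    fun k => QuotientGroup.mk' V (elemU k.castSucc k.succ (Fin.castSucc_lt_succ (i := k)) 1) with hgQ
  have hgQp : ∀ k, gQ k ^ p = 1 := by
    intro k
    rw [hgQ, ← map_pow, elemU_pow]
    apply (QuotientGroup.eq_one_iff _).mpr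
    apply le_sup_right (α := Subgroup G)
    apply Subgroup.subset_normalClosure
    exact ⟨elemU k.castSucc k.succ (Fin.castSucc_lt_succ (i := k)) 1, by rw [elemU_pow]⟩
  -- the section σ
  set σ : Multiplicative (Fin n → ZMod p) →* G ⧸ V :=
    { toFun := fun a => ∏ k, gQ k ^ (Multiplicative.toAdd a k).val,
      map_one' := by
        simp only [toAdd_one, Pi.zero_apply, ZMod.val_zero, pow_zero]
        exact Finset.prod_const_one
      map_mul' := fun a b => by
        show (∏ k, gQ k ^ (Multiplicative.toAdd (a * b) k).val)
          = (∏ k, gQ k ^ (Multiplicative.toAdd a k).val)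
            * ∏ k, gQ k ^ (Multiplicative.toAdd b k).val
        rw [← Finset.prod_mul_distrib]
        apply Finset.prod_congr rfl
        intro k _
        rw [toAdd_mul, Pi.add_apply, ZMod.val_add, ← pow_eq_pow_mod _ (hgQp k), pow_add] }
    with hσ
  set φbar : G ⧸ V →* Multiplicative (Fin n → ZMod p) := QuotientGroup.lift V φ hVker
    with hφbar
  -- value of φ on elementary matrices
  have hφelem : ∀ (k : Fin n) (c : ZMod (p ^ m)),
      φ (elemU k.castSucc k.succ (Fin.castSucc_lt_succ (i := k)) c)
        = Multiplicative.ofAdd (Pi.single k (ZMod.castHom hd (ZMod p) c)) := by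
    intro k c
    show Multiplicative.ofAdd _ = _
    congr 1
    funext l
    show ZMod.castHom hd (ZMod p)
      (UTentry (elemU k.castSucc k.succ (Fin.castSucc_lt_succ (i := k)) c) l.castSucc l.succ) = _
    rw [UTentry_elemU, Matrix.one_apply_ne (Fin.castSucc_lt_succ (i := l)).ne, zero_add]
    by_cases hlk : l = k
    · subst hlk
      rw [if_pos ⟨rfl, rfl⟩, Pi.single_eq_same]
    · rw [if_neg, Pi.single_eq_of_ne hlk, map_zero]
      rintro ⟨h1, -⟩
      exact hlk (Fin.castSucc_injective n h1).symm
  -- φbar ∘ σ = id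
  have hid : ∀ a, φbar (σ a) = a := by
    intro a
    show φbar (∏ k, gQ k ^ (Multiplicative.toAdd a k).val) = a
    rw [map_prod]
    have hterm : ∀ k : Fin n, φbar (gQ k ^ (Multiplicative.toAdd a k).val)
        = Multiplicative.ofAdd (Pi.single k (Multiplicative.toAdd a k)) := by
      intro k
      rw [map_pow, hgQ]
      rw [show φbar ((QuotientGroup.mk' V) (elemU k.castSucc k.succ (Fin.castSucc_lt_succ (i := k)) 1))
          = φ (elemU k.castSucc k.succ (Fin.castSucc_lt_succ (i := k)) 1) from
        QuotientGroup.lift_mk' V hVker _]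
      rw [hφelem k 1, _root_.map_one, ← ofAdd_nsmul]
      congr 1
      funext l
      rw [Pi.smul_apply]
      by_cases hlk : l = k
      · subst hlk
        rw [Pi.single_eq_same, Pi.single_eq_same, nsmul_eq_mul, mul_one,
          ZMod.natCast_val, ZMod.cast_id]
      · rw [Pi.single_eq_of_ne hlk, Pi.single_eq_of_ne hlk, smul_zero]
    rw [Finset.prod_congr rfl fun k _ => hterm k, ← ofAdd_sum, Finset.univ_sum_single]
    exact ofAdd_toAdd a
  have hσsingle : ∀ (k : Fin n) (y : ZMod p),
      σ (Multiplicative.ofAdd (Pi.single k y)) = gQ k ^ y.val := by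
    intro k y
    have h1 : ∀ l : Fin n, gQ l ^ ((Pi.single k y : Fin n → ZMod p) l).val
        = (if l = k then gQ k ^ y.val else 1) := by
      intro l
      by_cases hlk : l = k
      · subst hlk; rw [Pi.single_eq_same, if_pos rfl]
      · rw [Pi.single_eq_of_ne hlk, if_neg hlk, ZMod.val_zero, pow_zero]
    calc σ (Multiplicative.ofAdd (Pi.single k y))
        = ∏ l, gQ l ^ ((Pi.single k y : Fin n → ZMod p) l).val := rfl
      _ = gQ k ^ y.val := by
          rw [Finset.prod_congr rfl fun l _ => h1 l,
            Finset.prod_ite_eq' Finset.univ k (fun _ => gQ k ^ y.val),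
            if_pos (Finset.mem_univ k)]
  -- every element of the quotient is in the range of σ
  have hrange : ∀ u : G, QuotientGroup.mk' V u ∈ σ.range := by
    intro u
    refine Subgroup.closure_induction ?_ ?_ ?_ ?_ (UT_mem_closure_elemSet u)
    · rintro x ⟨i, j, hij, c, rfl⟩
      rcases eq_or_lt_of_le (by exact hij : (i : ℕ) + 1 ≤ (j : ℕ)) with hadj | hfar
      · -- adjacent : a power of a generator
        have hin : (i : ℕ) < n := by have := j.isLt; omega
        rcases j with ⟨jv, hjlt⟩
        have hjv : jv = (i : ℕ) + 1 := by simpa using hadj.symm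
        subst hjv
        set k : Fin n := ⟨(i : ℕ), hin⟩ with hk
        have hcv : (c.val) • (1 : ZMod (p ^ m)) = c := by
          rw [nsmul_eq_mul, mul_one, ZMod.natCast_val, ZMod.cast_id]
        have hc : elemU i ⟨(i : ℕ) + 1, hjlt⟩ hij c
            = elemU k.castSucc k.succ (Fin.castSucc_lt_succ (i := k)) 1 ^ (c.val) := by
          rw [elemU_pow, hcv]
          rfl
        rw [hc, map_pow]
        apply pow_mem
        refine ⟨Multiplicative.ofAdd (Pi.single k (1 : ZMod p)), ?_⟩
        rw [hσsingle k 1, ZMod.val_one, pow_one]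
      · -- distance ≥ 2 : a commutator, trivial in the quotient
        have hmid : (i : ℕ) + 1 < n + 1 := by have := j.isLt; omega
        set w : Fin (n + 1) := ⟨(i : ℕ) + 1, hmid⟩ with hw
        have h1 : i < w := by rw [Fin.lt_def]; simp [hw]
        have h2 : w < j := by rw [Fin.lt_def]; simp [hw]; omega
        have hco : ⁅elemU i w h1 c, elemU w j h2 1⁆ = elemU i j hij c := by
          rw [elemU_comm, mul_one]
        rw [← hco]
        have hmem : ⁅elemU i w h1 c, elemU w j h2 1⁆ ∈ V :=
          le_sup_left (α := Subgroup G)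
            (Subgroup.commutator_mem_commutator (Subgroup.mem_top _) (Subgroup.mem_top _))
        rw [show (QuotientGroup.mk' V) ⁅elemU i w h1 c, elemU w j h2 1⁆ = 1 from
          (QuotientGroup.eq_one_iff _).mpr hmem]
        exact one_mem _
    · rw [_root_.map_one]; exact one_mem _
    · intro x y _ _ hx hy
      rw [_root_.map_mul]; exact mul_mem hx hy
    · intro x _ hx
      rw [_root_.map_inv]; exact inv_mem hx
  have hσsurj : Function.Surjective σ := by
    intro x
    induction x using QuotientGroup.induction_on with | H z =>
    exact hrange z
  -- ker φ = V
  have hkerV : φ.ker ≤ V := by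
    intro u hu
    have h1 : φbar (QuotientGroup.mk' V u) = 1 :=
      (QuotientGroup.lift_mk' V hVker u).trans hu
    obtain ⟨a, ha⟩ := hσsurj (QuotientGroup.mk' V u)
    have ha1 : a = 1 := by rw [← hid a, ha, h1]
    rw [ha1, _root_.map_one] at ha
    exact (QuotientGroup.eq_one_iff u).mp ha.symm
  have hkerEq : φ.ker = V := le_antisymm hkerV hVker
  -- φ is surjective
  have hφsurj : Function.Surjective φ := by
    intro a
    obtain ⟨u, hu⟩ := QuotientGroup.mk'_surjective V (σ a)
    refine ⟨u, ?_⟩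
    rw [show φ u = φbar (QuotientGroup.mk' V u) from (QuotientGroup.lift_mk' V hVker u).symm,
      hu, hid]
  haveI : Finite G := inferInstance
  -- frattini G = ker φ
  have hfrale : frattini G ≤ φ.ker := by
    intro x hx
    have hcomp : ∀ i : Fin n, Multiplicative.toAdd (φ x) i = 0 := by
      intro i
      set π : Multiplicative (Fin n → ZMod p) →* Multiplicative (ZMod p) :=
        AddMonoidHom.toMultiplicative (Pi.evalAddMonoidHom (fun _ : Fin n => ZMod p) i) with hπ
      have hπs : Function.Surjective (π.comp φ) := by
        intro y
        refine ⟨elemU i.castSucc i.succ (Fin.castSucc_lt_succ (i := i))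
          (((Multiplicative.toAdd y).val : ℕ) : ZMod (p ^ m)), ?_⟩
        rw [MonoidHom.comp_apply, hφelem]
        have hval : (Pi.single i (ZMod.castHom hd (ZMod p)
            (((Multiplicative.toAdd y).val : ℕ) : ZMod (p ^ m))) : Fin n → ZMod p) i
            = Multiplicative.toAdd y := by
          rw [Pi.single_eq_same, map_natCast, ZMod.natCast_val, ZMod.cast_id]
        show Multiplicative.ofAdd ((Pi.single i (ZMod.castHom hd (ZMod p)
            (((Multiplicative.toAdd y).val : ℕ) : ZMod (p ^ m))) : Fin n → ZMod p) i) = y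
        rw [hval]
        exact ofAdd_toAdd y
      have hxk : x ∈ (π.comp φ).ker := frattini_le_coatom (ker_coatom _ hπs) hx
      have h1 : π (φ x) = 1 := hxk
      have h2 : Multiplicative.ofAdd (Multiplicative.toAdd (φ x) i) = 1 := h1
      simpa using h2
    show φ x = 1
    rw [show φ x = Multiplicative.ofAdd (Multiplicative.toAdd (φ x)) from rfl]
    rw [show (1 : Multiplicative (Fin n → ZMod p)) = Multiplicative.ofAdd 0 from rfl]
    congr 1
    funext i
    exact hcomp i
  have hfrage : φ.ker ≤ frattini G := by
    intro x hx
    have hxall : ∀ M : Subgroup G, IsCoatom M → x ∈ M := by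
      intro M hM
      have hnil : Group.IsNilpotent ↥G := hPG.isNilpotent
      have htfae := (isNilpotent_of_finite_tfae (G := ↥G)).out 0 2
      haveI hMnorm : M.Normal := htfae.mp hnil M hM
      obtain ⟨hcm, hpw⟩ := key_pow_comm hPG hM
      have hVM : V ≤ M := by
        apply sup_le
        · rw [commutator_def, Subgroup.commutator_le]
          exact fun a _ b _ => hcm a b
        · apply Subgroup.normalClosure_le_normal
          rintro y ⟨g, rfl⟩
          exact hpw g
      exact hVM (hkerEq ▸ hx)
    rw [frattini, Order.radical]
    simp only [Subgroup.mem_iInf]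
    intro M hM
    exact hxall M hM
  have hfr : frattini G = φ.ker := le_antisymm hfrale hfrage
  constructor
  · intro u
    rw [hfr]
    constructor
    · intro h i
      have h1 : φ u = 1 := h
      have h2 := congrArg Multiplicative.toAdd h1
      exact congrFun h2 i
    · intro h
      show φ u = 1
      rw [show φ u = Multiplicative.ofAdd (Multiplicative.toAdd (φ u)) from rfl,
        show (1 : Multiplicative (Fin n → ZMod p)) = Multiplicative.ofAdd 0 from rfl]
      congr 1
      funext i
      exact h i
  · set e0 : (G ⧸ frattini G) →* Multiplicative (Fin n → ZMod p) :=
      QuotientGroup.lift (frattini G) φ (le_of_eq hfr) with he0def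
    have he0 : ∀ u : G, e0 (QuotientGroup.mk u) = φ u := fun u =>
      QuotientGroup.lift_mk' (frattini G) (le_of_eq hfr) u
    have hbij : Function.Bijective e0 := by
      constructor
      · apply (injective_iff_map_eq_one e0).mpr
        intro a ha
        induction a using QuotientGroup.induction_on with | H z =>
        rw [he0] at ha
        have : z ∈ frattini G := by rw [hfr]; exact ha
        exact (QuotientGroup.eq_one_iff z).mpr this
      · intro a
        obtain ⟨u, hu⟩ := hφsurj a
        exact ⟨QuotientGroup.mk u, by rw [he0, hu]⟩
    refine ⟨MulEquiv.ofBijective e0 hbij, fun u => ?_⟩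
    show e0 (QuotientGroup.mk u) = _
    rw [he0]
    rfl
end

section
/- Let Γ be a finite p-group and θ : Γ → (𝔽_p)^n a surjective homomorphism. If ρ : Γ → U_{n+1}(ℤ/p^m) is any homomorphism satisfying φ_m ∘ ρ = θ, then ρ is surjective. -/
open Matrix

namespace LiftAux

variable {R : Type*} [CommRing R] {N : ℕ}

/-- The matrix of an element of `UT R N`. -/
def utm (u : UT R N) : Matrix (Fin N) (Fin N) R :=
  ((u : (Matrix (Fin N) (Fin N) R)ˣ) : Matrix (Fin N) (Fin N) R)

theorem utm_entry (u : UT R N) (i j : Fin N) : utm u i j = UTentry u i j := rfl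

theorem utm_mul (u v : UT R N) : utm (u * v) = utm u * utm v := rfl

theorem utm_one : utm (1 : UT R N) = 1 := rfl

theorem utm_tri (u : UT R N) {i j : Fin N} (h : (j : ℕ) < (i : ℕ)) : utm u i j = 0 :=
  u.2.1 h

theorem utm_diag (u : UT R N) (i : Fin N) : utm u i i = 1 := u.2.2 i

/-- `u` agrees with the identity at all off-diagonal entries of distance `< d`. -/
def Pd (d : ℕ) (u : UT R N) : Prop :=
  ∀ i j : Fin N, i ≠ j → (j : ℕ) < (i : ℕ) + d → utm u i j = 0

theorem Pd_one (d : ℕ) : Pd d (1 : UT R N) := fun i j hij _ => by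
  rw [utm_one]; exact Matrix.one_apply_ne hij

theorem Pd_all (u : UT R N) : Pd 1 u := by
  intro i j hij hlt
  have : (j : ℕ) < (i : ℕ) := by
    rcases lt_or_eq_of_le (Nat.lt_succ_iff.mp hlt) with h | h
    · exact h
    · exact absurd (Fin.ext h) (Ne.symm hij)
  exact utm_tri u this

theorem Pd_mono {d d' : ℕ} (h : d' ≤ d) {u : UT R N} (hu : Pd d u) : Pd d' u :=
  fun i j hij hlt => hu i j hij (lt_of_lt_of_le hlt (by omega))

theorem entry_mul_add {d : ℕ} {u v : UT R N} (hu : Pd d u) (hv : Pd d v)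
    {i j : Fin N} (hij : i ≠ j) (h : (j : ℕ) ≤ (i : ℕ) + d) :
    utm (u * v) i j = utm u i j + utm v i j := by
  rw [utm_mul, Matrix.mul_apply]
  have hsub : ({i, j} : Finset (Fin N)) ⊆ Finset.univ := Finset.subset_univ _
  rw [← Finset.sum_subset hsub]
  · rw [Finset.sum_insert (by simp [hij]), Finset.sum_singleton, utm_diag, utm_diag,
      one_mul, mul_one, add_comm]
  · intro k _ hk
    simp only [Finset.mem_insert, Finset.mem_singleton, not_or] at hk
    obtain ⟨hki, hkj⟩ := hk
    by_cases hlt : (k : ℕ) < (i : ℕ) + d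
    · rw [hu i k (Ne.symm hki) hlt, zero_mul]
    · have : (j : ℕ) < (k : ℕ) := by
        have : (j : ℕ) ≠ (k : ℕ) := fun hh => hkj (Fin.ext hh.symm)
        omega
      rw [utm_tri v this, mul_zero]

theorem Pd_mul {d : ℕ} {u v : UT R N} (hu : Pd d u) (hv : Pd d v) : Pd d (u * v) := by
  intro i j hij hlt
  rw [entry_mul_add hu hv hij (le_of_lt hlt), hu i j hij hlt, hv i j hij hlt, add_zero]

theorem Pd_pow {d : ℕ} {u : UT R N} (hu : Pd d u) (k : ℕ) : Pd d (u ^ k) := by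
  induction k with
  | zero => simpa using Pd_one d
  | succ k ih => rw [pow_succ]; exact Pd_mul ih hu

theorem Pd_inv [Finite R] {d : ℕ} {u : UT R N} (hu : Pd d u) : Pd d u⁻¹ := by
  have ho : u ^ orderOf u = 1 := pow_orderOf_eq_one u
  have hpos : 0 < orderOf u := orderOf_pos u
  have : u⁻¹ = u ^ (orderOf u - 1) := by
    symm
    apply eq_inv_of_mul_eq_one_left
    rw [← pow_succ, Nat.sub_add_cancel hpos, ho]
  rw [this]
  exact Pd_pow hu _

theorem entry_inv [Finite R] {d : ℕ} {u : UT R N} (hu : Pd d u)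
    {i j : Fin N} (hij : i ≠ j) (h : (j : ℕ) ≤ (i : ℕ) + d) :
    utm u⁻¹ i j = - utm u i j := by
  have h1 : utm (u⁻¹ * u) i j = utm u⁻¹ i j + utm u i j :=
    entry_mul_add (Pd_inv hu) hu hij h
  rw [inv_mul_cancel, utm_one, Matrix.one_apply_ne hij] at h1
  exact eq_neg_of_add_eq_zero_left h1.symm

end LiftAux

namespace LiftAux

variable {R : Type*} [CommRing R] {N : ℕ}

open Matrix

theorem std_sq_zero {i j : Fin N} (hij : i < j) (c d : R) :
    Matrix.single i j c * Matrix.single i j d = 0 :=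
  Matrix.single_mul_single_of_ne (c := c) i j i (ne_of_gt hij) d

/-- The elementary unipotent matrix `1 + c E_{i,j}` as a unit. -/
def elemU {i j : Fin N} (hij : i < j) (c : R) : (Matrix (Fin N) (Fin N) R)ˣ where
  val := 1 + Matrix.single i j c
  inv := 1 - Matrix.single i j c
  val_inv := by
    simp only [mul_sub, sub_mul, mul_add, add_mul, one_mul, mul_one, std_sq_zero hij]
    abel
  inv_val := by
    simp only [mul_sub, sub_mul, mul_add, add_mul, one_mul, mul_one, std_sq_zero hij]
    abel

theorem isUU_elemU {i j : Fin N} (hij : i < j) (c : R) :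
    IsUU ((elemU hij c : (Matrix (Fin N) (Fin N) R)ˣ) : Matrix (Fin N) (Fin N) R) := by
  constructor
  · intro a b hab
    have hne : ¬(i = a ∧ j = b) := by
      rintro ⟨rfl, rfl⟩
      exact absurd hab (not_lt.mpr (le_of_lt hij))
    have hab' : a ≠ b := fun h => absurd (h ▸ hab) (lt_irrefl _)
    show (1 + Matrix.single i j c) a b = 0
    rw [Matrix.add_apply, Matrix.one_apply_ne hab',
      Matrix.single_apply_of_ne (h := hne), add_zero]
  · intro a
    have hne : ¬(i = a ∧ j = a) := by
      rintro ⟨rfl, rfl⟩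
      exact absurd hij (lt_irrefl _)
    show (1 + Matrix.single i j c) a a = 1
    rw [Matrix.add_apply, Matrix.one_apply_eq,
      Matrix.single_apply_of_ne (h := hne), add_zero]

/-- The elementary unipotent matrix as an element of `UT R N`. -/
def elem {i j : Fin N} (hij : i < j) (c : R) : UT R N :=
  ⟨elemU hij c, isUU_elemU hij c⟩

theorem utm_elem {i j : Fin N} (hij : i < j) (c : R) :
    utm (elem hij c) = 1 + Matrix.single i j c := rfl

theorem utm_elem_apply_same {i j : Fin N} (hij : i < j) (c : R) :
    utm (elem hij c) i j = c := by
  rw [utm_elem, Matrix.add_apply, Matrix.one_apply_ne (ne_of_lt hij),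
    Matrix.single_apply_same, zero_add]

theorem utm_elem_apply_ne {i j : Fin N} (hij : i < j) (c : R) {a b : Fin N}
    (hab : a ≠ b) (h : ¬(a = i ∧ b = j)) : utm (elem hij c) a b = 0 := by
  rw [utm_elem, Matrix.add_apply, Matrix.one_apply_ne hab,
    Matrix.single_apply_of_ne, add_zero]
  tauto

theorem Pd_elem {d : ℕ} {i j : Fin N} (hij : i < j) (hd : (j : ℕ) = (i : ℕ) + d) (c : R) :
    Pd d (elem hij c) := by
  intro a b hab hlt
  refine utm_elem_apply_ne hij c hab ?_
  rintro ⟨rfl, rfl⟩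
  omega

theorem elemU_val_pow {i j : Fin N} (hij : i < j) (c : R) (k : ℕ) :
    ((elemU hij c).val) ^ k = 1 + Matrix.single i j ((k : R) * c) := by
  induction k with
  | zero => simp
  | succ k ih =>
    rw [pow_succ, ih]
    show (1 + Matrix.single i j ((k : R) * c)) * (1 + Matrix.single i j c) = _
    have hc : ((k + 1 : ℕ) : R) * c = (k : R) * c + c := by push_cast; ring
    rw [hc, Matrix.single_add]
    simp only [mul_add, add_mul, one_mul, mul_one, std_sq_zero hij]
    abel

theorem elem_pow {i j : Fin N} (hij : i < j) (c : R) (k : ℕ) :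
    elem hij c ^ k = elem hij ((k : R) * c) := by
  apply Subtype.ext
  apply Units.ext
  show ((elem hij c : (Matrix (Fin N) (Fin N) R)ˣ) ^ k : (Matrix (Fin N) (Fin N) R)ˣ).val
      = 1 + Matrix.single i j ((k : R) * c)
  rw [Units.val_pow_eq_pow_val]
  exact elemU_val_pow hij c k

theorem elem_commutator {i k j : Fin N} (hik : i < k) (hkj : k < j) (c : R) :
    elem (lt_trans hik hkj) c =
      elem hik (1 : R) * elem hkj c * (elem hik (1 : R))⁻¹ * (elem hkj c)⁻¹ := by
  have hij : i < j := lt_trans hik hkj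
  have key : elem hij c * (elem hkj c * elem hik (1 : R)) = elem hik (1 : R) * elem hkj c := by
    apply Subtype.ext
    apply Units.ext
    show ((elemU hij c).val) * ((elemU hkj c).val * (elemU hik (1:R)).val)
        = (elemU hik (1:R)).val * (elemU hkj c).val
    show (1 + Matrix.single i j c) * ((1 + Matrix.single k j c) * (1 + Matrix.single i k 1))
        = (1 + Matrix.single i k 1) * (1 + Matrix.single k j c)
    have h1 : Matrix.single k j c * Matrix.single i k (1:R) = 0 :=
      Matrix.single_mul_single_of_ne (c := c) k j i (ne_of_gt (lt_trans hik hkj)) 1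
    have h2 : Matrix.single i k (1:R) * Matrix.single k j c = Matrix.single i j (1 * c) :=
      Matrix.single_mul_single_same (c := 1) i k j c
    have h3 : Matrix.single i j c * Matrix.single k j c = 0 :=
      Matrix.single_mul_single_of_ne (c := c) i j k (ne_of_gt hkj) c
    have h4 : Matrix.single i j c * Matrix.single i k (1:R) = 0 :=
      Matrix.single_mul_single_of_ne (c := c) i j i (ne_of_gt hij) 1
    rw [one_mul] at h2
    simp only [mul_add, add_mul, one_mul, mul_one, h1, h2, h3, h4, mul_zero, zero_mul]
    abel
  have := key
  rw [← mul_assoc] at this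
  calc elem hij c = elem hij c * (elem hkj c * elem hik 1) *
        (elem hkj c * elem hik 1)⁻¹ := by group
    _ = elem hik 1 * elem hkj c * (elem hkj c * elem hik 1)⁻¹ := by rw [key]
    _ = elem hik 1 * elem hkj c * (elem hik 1)⁻¹ * (elem hkj c)⁻¹ := by
        rw [_root_.mul_inv_rev]
        group
  
end LiftAux

namespace LiftAux

variable {R : Type*} [CommRing R] [Finite R] {N : ℕ}

open Matrix

/-- Factor used in the clearing product. -/
def ggfac (d : ℕ) (hd : 0 < d) (w : ℕ → R) (i : ℕ) : UT R N :=
  if h : i + d < N then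
    elem (show (⟨i, by omega⟩ : Fin N) < ⟨i + d, h⟩ by simp [Fin.lt_def]; omega) (w i)
  else 1

/-- Partial products of the clearing factors. -/
def gg (d : ℕ) (hd : 0 < d) (w : ℕ → R) : ℕ → UT R N
  | 0 => 1
  | (t + 1) => gg d hd w t * ggfac d hd w t

theorem ggfac_Pd (d : ℕ) (hd : 0 < d) (w : ℕ → R) (i : ℕ) : Pd d (ggfac (N := N) d hd w i) := by
  unfold ggfac
  by_cases h : i + d < N
  · rw [dif_pos h]
    exact Pd_elem _ rfl _
  · rw [dif_neg h]
    exact Pd_one d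

theorem ggfac_entry (d : ℕ) (hd : 0 < d) (w : ℕ → R) (t : ℕ) {i j : Fin N} (hij : i ≠ j) :
    utm (ggfac d hd w t) i j = if (i : ℕ) = t ∧ (j : ℕ) = t + d then w t else 0 := by
  unfold ggfac
  by_cases h : t + d < N
  · rw [dif_pos h]
    by_cases hc : (i : ℕ) = t ∧ (j : ℕ) = t + d
    · rw [if_pos hc]
      rw [utm_elem, Matrix.add_apply, Matrix.one_apply_ne hij]
      simp [Matrix.single, Matrix.of_apply, Fin.ext_iff, hc.1, hc.2]
    · rw [if_neg hc]
      refine utm_elem_apply_ne _ _ hij ?_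
      rintro ⟨rfl, rfl⟩
      exact hc ⟨rfl, rfl⟩
  · rw [dif_neg h]
    rw [utm_one, Matrix.one_apply_ne hij, if_neg]
    rintro ⟨-, hj⟩
    exact h (by omega)

theorem gg_entry (d : ℕ) (hd : 0 < d) (w : ℕ → R) :
    ∀ t : ℕ, ∀ i j : Fin N, i ≠ j → (j : ℕ) ≤ (i : ℕ) + d →
      utm (gg d hd w t) i j = if (j : ℕ) = (i : ℕ) + d ∧ (i : ℕ) < t then w i else 0 := by
  intro t
  induction t with
  | zero =>
    intro i j hij h
    show utm (1 : UT R N) i j = _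
    rw [utm_one, Matrix.one_apply_ne hij, if_neg]
    rintro ⟨-, hi⟩
    omega
  | succ t ih =>
    intro i j hij h
    have hPt : Pd d (gg (N := N) d hd w t) := by
      intro a b hab hlt
      rw [ih a b hab (le_of_lt hlt), if_neg]
      rintro ⟨h1, -⟩
      omega
    show utm (gg d hd w t * ggfac d hd w t) i j = _
    rw [entry_mul_add hPt (ggfac_Pd d hd w t) hij h, ih i j hij h, ggfac_entry d hd w t hij]
    by_cases hc2 : (i : ℕ) = t ∧ (j : ℕ) = t + d
    · have hc1 : ¬((j : ℕ) = (i : ℕ) + d ∧ (i : ℕ) < t) := by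
        rintro ⟨-, hlt'⟩
        omega
      rw [if_neg hc1, if_pos hc2, if_pos (⟨by omega, by omega⟩ :
        (j : ℕ) = (i : ℕ) + d ∧ (i : ℕ) < t + 1), zero_add, hc2.1]
    · by_cases hc1 : (j : ℕ) = (i : ℕ) + d ∧ (i : ℕ) < t
      · rw [if_pos hc1, if_neg hc2, if_pos (⟨hc1.1, by omega⟩ :
          (j : ℕ) = (i : ℕ) + d ∧ (i : ℕ) < t + 1), add_zero]
      · rw [if_neg hc1, if_neg hc2, add_zero, if_neg]
        rintro ⟨hj', hi'⟩
        rcases Nat.lt_succ_iff_lt_or_eq.mp hi' with hcase | hcase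
        · exact hc1 ⟨hj', hcase⟩
        · exact hc2 ⟨hcase, by omega⟩

theorem gg_Pd (d : ℕ) (hd : 0 < d) (w : ℕ → R) (t : ℕ) : Pd d (gg (N := N) d hd w t) := by
  intro a b hab hlt
  rw [gg_entry d hd w t a b hab (le_of_lt hlt), if_neg]
  rintro ⟨h1, -⟩
  omega

theorem gg_mem (d : ℕ) (hd : 0 < d) (w : ℕ → R) (K : Subgroup ↥(UT R N))
    (hfac : ∀ i : ℕ, ggfac (N := N) d hd w i ∈ K) (t : ℕ) : gg (N := N) d hd w t ∈ K := by
  induction t with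
  | zero => exact one_mem K
  | succ t ih => exact mul_mem ih (hfac t)

/-- Any matrix which is trivial at all distances `< d` (`d ≥ 2`) is a product of commutators. -/
theorem step2 {K : Subgroup ↥(UT R N)}
    (hcom : ∀ a b : ↥(UT R N), a * b * a⁻¹ * b⁻¹ ∈ K) :
    ∀ s d : ℕ, 2 ≤ d → N ≤ d + s → ∀ u : ↥(UT R N), Pd d u → u ∈ K := by
  intro s
  induction s with
  | zero =>
    intro d hd hN u hu
    have : u = 1 := by
      apply Subtype.ext
      apply Units.ext
      show utm u = (1 : Matrix (Fin N) (Fin N) R)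
      ext i j
      by_cases hij : i = j
      · subst hij
        rw [utm_diag, Matrix.one_apply_eq]
      · rw [hu i j hij (by omega), Matrix.one_apply_ne hij]
    rw [this]
    exact one_mem K
  | succ s ih =>
    intro d hd hN u hu
    by_cases hNs : N ≤ d + s
    · exact ih d hd hNs u hu
    have hdpos : 0 < d := by omega
    set w : ℕ → R := fun i => if h : i + d < N then utm u ⟨i, by omega⟩ ⟨i + d, h⟩ else 0 with hw
    have hfac : ∀ i : ℕ, ggfac (N := N) d hdpos w i ∈ K := by
      intro i
      unfold ggfac
      by_cases h : i + d < N
      · rw [dif_pos h]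
        have h1 : (⟨i, by omega⟩ : Fin N) < ⟨i + 1, by omega⟩ := by
          simp [Fin.lt_def]
        have h2 : (⟨i + 1, by omega⟩ : Fin N) < ⟨i + d, h⟩ := by
          simp [Fin.lt_def]; omega
        have := elem_commutator h1 h2 (w i)
        rw [show lt_trans h1 h2 = (show (⟨i, by omega⟩ : Fin N) < ⟨i + d, h⟩ by
          simp [Fin.lt_def]; omega) from rfl] at this
        rw [this]
        exact hcom _ _
      · rw [dif_neg h]
        exact one_mem K
    set g := gg (N := N) d hdpos w N with hg
    have hgPd : Pd d g := gg_Pd d hdpos w N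
    have hvPd : Pd (d + 1) (g⁻¹ * u) := by
      intro i j hij hlt
      have h' : (j : ℕ) ≤ (i : ℕ) + d := by omega
      rw [entry_mul_add (Pd_inv hgPd) hu hij h', entry_inv hgPd hij h',
        gg_entry d hdpos w N i j hij h']
      by_cases hc : (j : ℕ) = (i : ℕ) + d
      · rw [if_pos ⟨hc, i.isLt⟩]
        simp only [hw]
        have hiN : (i : ℕ) + d < N := by omega
        rw [dif_pos hiN]
        have h1 : (⟨(i : ℕ), by omega⟩ : Fin N) = i := Fin.ext rfl
        have h2 : (⟨(i : ℕ) + d, hiN⟩ : Fin N) = j := Fin.ext hc.symm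
        rw [h1, h2]
        ring
      · rw [if_neg (by tauto), hu i j hij (by omega)]
        ring
    have hvK : g⁻¹ * u ∈ K := ih (d + 1) (by omega) (by omega) _ hvPd
    have hgK : g ∈ K := gg_mem d hdpos w K hfac N
    have : u = g * (g⁻¹ * u) := by group
    rw [this]
    exact mul_mem hgK hvK

/-- Any element whose superdiagonal entries are divisible by `q` lies in the subgroup
generated by commutators and `q`-th powers. -/
theorem mem_of_superdiag_dvd {K : Subgroup ↥(UT R N)} (q : ℕ)
    (hcom : ∀ a b : ↥(UT R N), a * b * a⁻¹ * b⁻¹ ∈ K)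
    (hpow : ∀ a : ↥(UT R N), a ^ q ∈ K) (u : ↥(UT R N))
    (hu : ∀ i j : Fin N, (j : ℕ) = (i : ℕ) + 1 → ∃ a : R, utm u i j = (q : R) * a) :
    u ∈ K := by
  set a : ℕ → R := fun i => if h : i + 1 < N then
    Classical.choose (hu ⟨i, by omega⟩ ⟨i + 1, h⟩ rfl) else 0 with ha
  set w : ℕ → R := fun i => (q : R) * a i with hw
  have hfac : ∀ i : ℕ, ggfac (N := N) 1 one_pos w i ∈ K := by
    intro i
    unfold ggfac
    by_cases h : i + 1 < N
    · rw [dif_pos h]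
      have hlt : (⟨i, by omega⟩ : Fin N) < ⟨i + 1, h⟩ := by simp [Fin.lt_def]
      have key : elem hlt (w i) = elem hlt (a i) ^ q := by
        simp only [hw]
        rw [elem_pow]
      have hK := hpow (elem hlt (a i))
      rw [← key] at hK
      exact hK
    · rw [dif_neg h]
      exact one_mem K
  set g := gg (N := N) 1 one_pos w N with hg
  have hgPd : Pd 1 g := Pd_all g
  have hvPd : Pd 2 (g⁻¹ * u) := by
    intro i j hij hlt
    have h' : (j : ℕ) ≤ (i : ℕ) + 1 := by omega
    rw [entry_mul_add (Pd_inv hgPd) (Pd_all u) hij h', entry_inv hgPd hij h',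
      gg_entry 1 one_pos w N i j hij h']
    by_cases hc : (j : ℕ) = (i : ℕ) + 1
    · rw [if_pos ⟨hc, i.isLt⟩]
      simp only [hw, ha]
      have hiN : (i : ℕ) + 1 < N := by omega
      rw [dif_pos hiN]
      have hspec := Classical.choose_spec (hu ⟨(i : ℕ), by omega⟩ ⟨(i : ℕ) + 1, hiN⟩ rfl)
      have h1 : (⟨(i : ℕ), by omega⟩ : Fin N) = i := Fin.ext rfl
      have h2 : (⟨(i : ℕ) + 1, hiN⟩ : Fin N) = j := Fin.ext hc.symm
      rw [← hspec, h1, h2]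
      ring
    · have hji : (j : ℕ) < (i : ℕ) := by
        have : (j : ℕ) ≠ (i : ℕ) := fun hh => hij (Fin.ext hh.symm)
        omega
      rw [if_neg (by tauto), utm_tri u hji]
      ring
  have hvK : g⁻¹ * u ∈ K := step2 hcom N 2 le_rfl (by omega) _ hvPd
  have hgK : g ∈ K := gg_mem 1 one_pos w K hfac N
  have : u = g * (g⁻¹ * u) := by group
  rw [this]
  exact mul_mem hgK hvK

end LiftAux

namespace LiftAux

/-- In a finite `p`-group, a maximal subgroup contains all commutators and `p`-th powers. -/
theorem coatom_absorbs {G : Type*} [Group G] [Finite G] {p : ℕ} [Fact p.Prime]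
    (hG : IsPGroup p G) {M : Subgroup G} (hM : IsCoatom M) :
    (∀ a b : G, a * b * a⁻¹ * b⁻¹ ∈ M) ∧ (∀ a : G, a ^ p ∈ M) := by
  haveI : Group.IsNilpotent G := hG.isNilpotent
  haveI hnorm : M.Normal :=
    Subgroup.NormalizerCondition.normal_of_coatom M normalizerCondition_of_isNilpotent hM
  set q : G →* G ⧸ M := QuotientGroup.mk' M with hq
  have hqsurj : Function.Surjective q := QuotientGroup.mk'_surjective M
  have hker : q.ker = M := QuotientGroup.ker_mk' M
  -- every subgroup of the quotient is ⊥ or ⊤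
  have hsub : ∀ S : Subgroup (G ⧸ M), S = ⊥ ∨ S = ⊤ := by
    intro S
    have h1 : M ≤ Subgroup.comap q S :=
      le_trans (le_of_eq hker.symm) (Subgroup.ker_le_comap (f := q) S)
    have h2 : Subgroup.comap q S = M ∨ Subgroup.comap q S = ⊤ := by
      rcases lt_or_eq_of_le h1 with h | h
      · exact Or.inr (hM.2 _ h)
      · exact Or.inl h.symm
    have h3 : Subgroup.map q (Subgroup.comap q S) = S :=
      Subgroup.map_comap_eq_self_of_surjective hqsurj S
    rcases h2 with h | h
    · left
      rw [← h3, h]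
      exact (Subgroup.map_eq_bot_iff _).mpr (le_of_eq hker.symm)
    · right
      rw [← h3, h]
      exact Subgroup.map_top_of_surjective q hqsurj
  -- find a generator of prime order
  obtain ⟨g, hg⟩ : ∃ g : G, g ∉ M := by
    by_contra hcon
    push_neg at hcon
    exact hM.1 ((Subgroup.eq_top_iff' M).mpr hcon)
  have hx1 : (q g : G ⧸ M) ≠ 1 := by
    rw [hq]
    intro hcon
    rw [QuotientGroup.mk'_apply, QuotientGroup.eq_one_iff] at hcon
    exact hg hcon
  have hQp : IsPGroup p (G ⧸ M) := hG.to_quotient M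
  obtain ⟨k, hk⟩ := hQp (q g)
  have hex : ∃ k, (q g) ^ p ^ k = 1 := ⟨k, hk⟩
  classical
  let k₀ := Nat.find hex
  have hk₀ : (q g) ^ p ^ k₀ = 1 := Nat.find_spec hex
  have hk₀pos : 0 < k₀ := by
    rcases Nat.eq_zero_or_pos k₀ with h | h
    · exfalso
      apply hx1
      have := hk₀
      rw [h, pow_zero, pow_one] at this
      exact this
    · exact h
  set y : G ⧸ M := (q g) ^ p ^ (k₀ - 1) with hy
  have hy1 : y ≠ 1 := Nat.find_min hex (Nat.sub_lt hk₀pos one_pos)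
  have hyp : y ^ p = 1 := by
    rw [hy, ← pow_mul, ← pow_succ, Nat.sub_add_cancel hk₀pos, hk₀]
  have hzy : Subgroup.zpowers y = ⊤ := by
    rcases hsub (Subgroup.zpowers y) with h | h
    · exact absurd (Subgroup.zpowers_eq_bot.mp h) hy1
    · exact h
  have hall : ∀ z : G ⧸ M, ∃ i : ℤ, z = y ^ i := by
    intro z
    have : z ∈ Subgroup.zpowers y := hzy ▸ Subgroup.mem_top z
    obtain ⟨i, hi⟩ := this
    exact ⟨i, hi.symm⟩
  constructor
  · intro a b
    rw [← hker, MonoidHom.mem_ker]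
    obtain ⟨i, hi⟩ := hall (q a)
    obtain ⟨j, hj⟩ := hall (q b)
    rw [_root_.map_mul, _root_.map_mul, _root_.map_mul, map_inv, map_inv, hi, hj, ← _root_.zpow_neg, ← _root_.zpow_neg,
      ← _root_.zpow_add, ← _root_.zpow_add, ← _root_.zpow_add]
    rw [show i + j + -i + -j = 0 by ring, zpow_zero]
  · intro a
    rw [← hker, MonoidHom.mem_ker, map_pow]
    obtain ⟨i, hi⟩ := hall (q a)
    rw [hi, ← zpow_natCast, ← _root_.zpow_mul, mul_comm, _root_.zpow_mul, zpow_natCast, hyp, _root_.one_zpow]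

end LiftAux

namespace LiftAux

open Matrix

theorem strict_tri_pow {R : Type*} [CommRing R] {N : ℕ}
    (A : Matrix (Fin N) (Fin N) R) (hA : ∀ i j : Fin N, (j : ℕ) ≤ (i : ℕ) → A i j = 0) :
    ∀ k : ℕ, ∀ i j : Fin N, (j : ℕ) < (i : ℕ) + k → (A ^ k) i j = 0 := by
  intro k
  induction k with
  | zero =>
    intro i j h
    have : j ≠ i := fun hh => by omega
    rw [pow_zero]
    exact Matrix.one_apply_ne' this
  | succ k ih =>
    intro i j h
    rw [pow_succ, Matrix.mul_apply]
    apply Finset.sum_eq_zero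
    intro l _
    by_cases hl : (l : ℕ) < (i : ℕ) + k
    · rw [ih i l hl, zero_mul]
    · rw [hA l j (by omega), mul_zero]

theorem pm_dvd_choose {p : ℕ} (hp : p.Prime) (m n : ℕ) {i : ℕ} (h1 : i ≠ 0) (h2 : i ≤ n) :
    p ^ m ∣ (p ^ (m + n)).choose i := by
  have hn : n < p ^ n := Nat.lt_pow_self hp.one_lt
  have hile : i ≤ p ^ (m + n) := by
    calc i ≤ n := h2
    _ ≤ p ^ n := le_of_lt hn
    _ ≤ p ^ (m + n) := Nat.pow_le_pow_right hp.pos (by omega)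
  have hmult := Nat.Prime.emultiplicity_choose_prime_pow hp hile h1
  have hfin : multiplicity p i < n := by
    have hdvd : p ^ multiplicity p i ∣ i := pow_multiplicity_dvd p i
    have hle : p ^ multiplicity p i ≤ i := Nat.le_of_dvd (Nat.pos_of_ne_zero h1) hdvd
    by_contra hcon
    push_neg at hcon
    have : p ^ n ≤ p ^ multiplicity p i := Nat.pow_le_pow_right hp.pos hcon
    omega
  apply pow_dvd_of_le_emultiplicity
  rw [hmult]
  exact_mod_cast (by omega : m ≤ m + n - multiplicity p i)

theorem isPGroup_UT (p m n : ℕ) [Fact p.Prime] [NeZero (p ^ m)] :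
    IsPGroup p ↥(UT (ZMod (p ^ m)) (n + 1)) := by
  intro u
  refine ⟨m + n, ?_⟩
  apply Subtype.ext
  apply Units.ext
  have hcoe : (((u ^ p ^ (m + n) : ↥(UT (ZMod (p ^ m)) (n + 1))) :
      (Matrix (Fin (n + 1)) (Fin (n + 1)) (ZMod (p ^ m)))ˣ) :
      Matrix (Fin (n + 1)) (Fin (n + 1)) (ZMod (p ^ m))) = (utm u) ^ (p ^ (m + n)) := by
    rw [SubgroupClass.coe_pow, Units.val_pow_eq_pow_val]
    rfl
  show _ = ((1 : (Matrix (Fin (n + 1)) (Fin (n + 1)) (ZMod (p ^ m)))ˣ) :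
      Matrix (Fin (n + 1)) (Fin (n + 1)) (ZMod (p ^ m)))
  rw [hcoe, Units.val_one]
  set B := utm u - 1 with hB
  have hBlow : ∀ i j : Fin (n + 1), (j : ℕ) ≤ (i : ℕ) → B i j = 0 := by
    intro i j hle
    rw [hB, Matrix.sub_apply]
    by_cases hij : j = i
    · subst hij
      rw [utm_diag, Matrix.one_apply_eq, sub_self]
    · have : (j : ℕ) < (i : ℕ) := by
        have : (j : ℕ) ≠ (i : ℕ) := fun hh => hij (Fin.ext hh)
        omega
      rw [utm_tri u this, Matrix.one_apply_ne' hij, sub_zero]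
  have hA : utm u = B + 1 := by rw [hB, sub_add_cancel]
  rw [hA, Commute.add_pow (Commute.one_right B)]
  rw [Finset.sum_eq_single_of_mem 0 (Finset.mem_range.mpr (by positivity))]
  · simp
  · intro k _ hk
    by_cases hkn : k ≤ n
    · have hdvd : p ^ m ∣ (p ^ (m + n)).choose k := pm_dvd_choose Fact.out m n hk hkn
      obtain ⟨t, ht⟩ := hdvd
      have hcast : (((p ^ (m + n)).choose k : ℕ) :
          Matrix (Fin (n + 1)) (Fin (n + 1)) (ZMod (p ^ m))) = 0 := by
        rw [← map_natCast (Matrix.scalar (Fin (n + 1))) ((p ^ (m + n)).choose k)]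
        have : (((p ^ (m + n)).choose k : ℕ) : ZMod (p ^ m)) = 0 :=
          (ZMod.natCast_eq_zero_iff _ _).mpr ⟨t, ht⟩
        rw [this, map_zero]
      rw [hcast, mul_zero]
    · have hBk : B ^ k = 0 := by
        have hsplit : B ^ k = B ^ (n + 1) * B ^ (k - (n + 1)) := by
          rw [← pow_add]
          congr 1
          omega
        have hBn : B ^ (n + 1) = (0 : Matrix (Fin (n + 1)) (Fin (n + 1)) (ZMod (p ^ m))) := by
          ext i j
          rw [strict_tri_pow B hBlow (n + 1) i j (by omega)]
          rfl
        rw [hsplit, hBn, zero_mul]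
      rw [hBk, zero_mul, zero_mul]

theorem exists_of_cast_eq_zero {p m : ℕ} [Fact p.Prime] [NeZero (p ^ m)] (hm : p ∣ p ^ m)
    (x : ZMod (p ^ m)) (hx : ZMod.castHom hm (ZMod p) x = 0) :
    ∃ a : ZMod (p ^ m), x = (p : ZMod (p ^ m)) * a := by
  haveI : NeZero p := ⟨(Fact.out : p.Prime).ne_zero⟩
  have hval : ((x.val : ℕ) : ZMod p) = 0 := by
    rw [ZMod.natCast_val]
    rw [ZMod.castHom_apply] at hx
    exact hx
  obtain ⟨t, ht⟩ := (ZMod.natCast_eq_zero_iff _ _).mp hval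
  refine ⟨(t : ZMod (p ^ m)), ?_⟩
  have : ((x.val : ℕ) : ZMod (p ^ m)) = x := ZMod.natCast_zmod_val x
  rw [← this, ht]
  push_cast
  ring

end LiftAux

open LiftAux

/-- if `θ : Γ → (𝔽_p)^n` is a surjective homomorphism from a finite `p`-group
and `ρ : Γ → U_{n+1}(ℤ/p^m)` satisfies `φ_m ∘ ρ = θ`, then `ρ` is surjective. -/
theorem lifting_of_surjective_theta_is_surjective (p m n : ℕ) [Fact p.Prime]
    (hm : 1 ≤ m) (hn : 1 ≤ n) {Γ : Type*} [Group Γ] [Finite Γ] (hΓ : IsPGroup p Γ)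
    (θ : Γ → (Fin n → ZMod p)) (hθhom : ∀ a b, θ (a * b) = θ a + θ b)
    (hθsurj : Function.Surjective θ)
    (ρ : Γ →* UT (ZMod (p ^ m)) (n + 1))
    (hcomp : ∀ g i, ZMod.castHom (dvd_pow_self p (Nat.one_le_iff_ne_zero.mp hm)) (ZMod p)
      (UTentry (ρ g) i.castSucc i.succ) = θ g i) :
    Function.Surjective ρ := by
  haveI : NeZero (p ^ m) := ⟨pow_ne_zero m (Nat.Prime.ne_zero Fact.out)⟩
  rw [← MonoidHom.range_eq_top]
  by_contra hne
  obtain ⟨M, hM, hle⟩ := (eq_top_or_exists_le_coatom ρ.range).resolve_left hne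
  have hPG : IsPGroup p ↥(UT (ZMod (p ^ m)) (n + 1)) := isPGroup_UT p m n
  obtain ⟨hcomM, hpowM⟩ := coatom_absorbs hPG hM
  apply hM.1
  rw [Subgroup.eq_top_iff' M]
  intro g
  obtain ⟨γ, hγ⟩ := hθsurj (fun i => ZMod.castHom (dvd_pow_self p (Nat.one_le_iff_ne_zero.mp hm))
    (ZMod p) (UTentry g i.castSucc i.succ))
  have hmem : (ρ γ)⁻¹ * g ∈ M := by
    apply mem_of_superdiag_dvd p hcomM hpowM
    intro i j hij1
    have hijne : i ≠ j := by
      intro h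
      rw [h] at hij1
      omega
    apply exists_of_cast_eq_zero (dvd_pow_self p (Nat.one_le_iff_ne_zero.mp hm))
    have hi' : (i : ℕ) < n := by
      have := j.isLt
      omega
    set i' : Fin n := ⟨(i : ℕ), hi'⟩ with hi'def
    have hic : i'.castSucc = i := Fin.ext rfl
    have hisucc : i'.succ = j := Fin.ext (by simp [Fin.val_succ, hi'def, hij1])
    have hadd : utm ((ρ γ)⁻¹ * g) i j = - utm (ρ γ) i j + utm g i j := by
      rw [entry_mul_add (Pd_inv (Pd_all (ρ γ))) (Pd_all g) hijne (by omega),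
        entry_inv (Pd_all (ρ γ)) hijne (by omega)]
    rw [hadd, map_add, map_neg]
    have h1 : ZMod.castHom (dvd_pow_self p (Nat.one_le_iff_ne_zero.mp hm)) (ZMod p)
        (utm (ρ γ) i j) = θ γ i' := by
      rw [← hic, ← hisucc]
      exact hcomp γ i'
    have h2 : ZMod.castHom (dvd_pow_self p (Nat.one_le_iff_ne_zero.mp hm)) (ZMod p)
        (utm g i j) = θ γ i' := by
      rw [hγ]
      rw [← hic, ← hisucc]
      rfl
    rw [h1, h2]
    ring
  have hγmem : ρ γ ∈ M := hle ⟨γ, rfl⟩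
  have : g = ρ γ * ((ρ γ)⁻¹ * g) := by group
  rw [this]
  exact mul_mem hγmem hmem
end
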